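/- For every constant c > 1/e, Feige's conjectured bound fails with c in place of 1/e: there exist n ≥ 1, δ > 0, weights μ_1 = … = μ_n = 1/n (so M = 1/n), and independent non-negative random variables X_1, …, X_n each with expectation 1, such that P(∑_{i=1}^n μ_i X_i < 1+δ) < min(δ/(δ + M), c). -/

import Mathlib

open MeasureTheory ProbabilityTheory Filter
open scoped ENNReal

lemma pi_inter_eval {ι : Type*} [Fintype ι] {α : ι → Type*} [∀ i, MeasurableSpace (α i)]
    (μ : ∀ i, Measure (α i)) [∀ i, IsProbabilityMeasure (μ i)]
    (S : Finset ι) (t : ∀ i, Set (α i)) :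
    Measure.pi μ (⋂ i ∈ S, Function.eval i ⁻¹' t i) = ∏ i ∈ S, μ i (t i) := by
  classical
  have hset : (⋂ i ∈ S, Function.eval i ⁻¹' t i)
      = Set.pi Set.univ (fun i => if i ∈ S then t i else Set.univ) := by
    ext ω
    simp only [Set.mem_iInter, Set.mem_preimage, Set.mem_pi, Set.mem_univ, true_implies,
      Function.eval]
    constructor
    · intro h i
      split_ifs with hi
      · exact h i hi
      · trivial
    · intro h i hi
      have := h i
      rwa [if_pos hi] at this
  rw [hset, Measure.pi_pi]
  have : ∀ i : ι, μ i (if i ∈ S then t i else Set.univ)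
      = if i ∈ S then μ i (t i) else 1 := by
    intro i
    split_ifs with hi <;> simp
  simp_rw [this]
  rw [Finset.prod_ite_mem Finset.univ S (fun i => μ i (t i)), Finset.univ_inter]

lemma iIndepFun_pi_eval {ι : Type*} [Fintype ι] {α : ι → Type*} [∀ i, MeasurableSpace (α i)]
    (μ : ∀ i, Measure (α i)) [∀ i, IsProbabilityMeasure (μ i)]
    {β : ι → Type*} [mβ : ∀ i, MeasurableSpace (β i)] (g : ∀ i, α i → β i) :
    iIndepFun (fun i ω => g i (ω i)) (Measure.pi μ) := by
  rw [iIndepFun_iff_measure_inter_preimage_eq_mul]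
  intro S sets _
  have hpre : ∀ i : ι, (fun ω : ∀ j, α j => g i (ω i)) ⁻¹' sets i
      = Function.eval i ⁻¹' (g i ⁻¹' sets i) := fun i => rfl
  simp_rw [hpre]
  rw [pi_inter_eval μ S (fun i => g i ⁻¹' sets i)]
  refine Finset.prod_congr rfl fun i _ => ?_
  have := pi_inter_eval μ {i} (fun j => g j ⁻¹' sets j)
  simpa using this.symm

/-- Feige's conjectured bound fails for any constant `c > 1/e` in place of `1/e`. -/
theorem feige_constant_optimal (c : ℝ) (hc : 1 / Real.exp 1 < c) :
    ∃ (n : ℕ), 0 < n ∧ ∃ (δ : ℝ), 0 < δ ∧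
      ∃ (Ω : Type) (_ : MeasurableSpace Ω) (P : Measure Ω) (_ : IsProbabilityMeasure P)
        (X : Fin n → Ω → ℝ),
        (∀ i, Measurable (X i)) ∧
        iIndepFun X P ∧
        (∀ i ω, 0 ≤ X i ω) ∧
        (∀ i, ∫ ω, X i ω ∂P = 1) ∧
        (P {ω | ∑ i, (1 / (n : ℝ)) * X i ω < 1 + δ}).toReal <
          min (δ / (δ + 1 / (n : ℝ))) c := by
  -- Step 1: choose `N` large
  have hexp : Real.exp (-1) < min (9 / 19 : ℝ) c := by
    have h1 : Real.exp (-1) = 1 / Real.exp 1 := by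
      rw [Real.exp_neg, one_div]
    have h2 : (19 : ℝ) / 9 < Real.exp 1 :=
      lt_trans (by norm_num) Real.exp_one_gt_d9
    have h3 : Real.exp (-1) < 9 / 19 := by
      rw [h1, div_lt_div_iff₀ (Real.exp_pos 1) (by norm_num)]
      nlinarith [Real.exp_pos 1]
    rw [h1] at *
    exact lt_min h3 hc
  have htend : Tendsto (fun n : ℕ => Real.exp (-((n : ℝ) / (n + 1)))) atTop
      (nhds (Real.exp (-1))) := by
    have h0 : Tendsto (fun n : ℕ => 1 / ((n : ℝ) + 1)) atTop (nhds 0) :=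
      tendsto_one_div_add_atTop_nhds_zero_nat
    have h1 : Tendsto (fun n : ℕ => (n : ℝ) / (n + 1)) atTop (nhds 1) := by
      have heq : ∀ n : ℕ, (n : ℝ) / (n + 1) = 1 - 1 / ((n : ℝ) + 1) := by
        intro n
        have : ((n : ℝ) + 1) ≠ 0 := by positivity
        field_simp
        ring
      simp_rw [heq]
      simpa using (tendsto_const_nhds (x := (1 : ℝ))).sub h0
    have := (Real.continuous_exp.tendsto (-1)).comp h1.neg
    exact this
  obtain ⟨N, hNge, hNlt⟩ : ∃ N : ℕ, 1 ≤ N ∧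
      Real.exp (-((N : ℝ) / (N + 1))) < min (9 / 19 : ℝ) c :=
    ((eventually_ge_atTop 1).and (htend.eventually_lt_const hexp)).exists.imp
      fun N h => ⟨h.1, h.2⟩
  have hN0 : (0 : ℝ) < N := by exact_mod_cast hNge
  have hN1 : (0 : ℝ) < (N : ℝ) + 1 := by linarith
  -- Step 2: the probability space
  set p : ℝ≥0∞ := ((N : ℝ≥0∞) + 1)⁻¹ with hp_def
  have hple : p ≤ 1 := by
    rw [hp_def]
    apply ENNReal.inv_le_one.mpr
    exact le_add_self
  set μ : Measure Bool := (PMF.bernoulli p.toNNReal (by have := ENNReal.toNNReal_mono ENNReal.one_ne_top hple; rwa [ENNReal.toNNReal_one] at this)).toMeasure with hμ_def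
  haveI : IsProbabilityMeasure μ := PMF.toMeasure.isProbabilityMeasure _
  set P : Measure (Fin N → Bool) := Measure.pi (fun _ => μ) with hP_def
  haveI : IsProbabilityMeasure P := by rw [hP_def]; infer_instance
  set X : Fin N → (Fin N → Bool) → ℝ :=
    fun i ω => if ω i then (N : ℝ) + 1 else 0 with hX_def
  set δ : ℝ := 9 / (10 * N) with hδ_def
  have hδpos : 0 < δ := by rw [hδ_def]; positivity
  refine ⟨N, hNge, δ, hδpos, Fin N → Bool, inferInstance, P, inferInstance, X, ?_, ?_, ?_, ?_, ?_⟩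
  · -- measurability
    intro i
    have hXc : X i = (fun b : Bool => if b then (N : ℝ) + 1 else 0) ∘
        (fun ω : Fin N → Bool => ω i) := rfl
    rw [hXc]
    exact (measurable_of_countable _).comp (measurable_pi_apply i)
  · -- independence
    exact iIndepFun_pi_eval (fun _ => μ) (fun i b => if b then (N : ℝ) + 1 else 0)
  · -- nonnegativity
    intro i ω
    simp only [hX_def]
    split_ifs <;> positivity
  · -- expectation
    intro i
    have hμtrue : μ {true} = p := by
      rw [hμ_def, PMF.toMeasure_apply_singleton _ true (measurableSet_singleton true)]
      rw [PMF.bernoulli_apply]; exact ENNReal.coe_toNNReal (by rw [hp_def]; simp)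
    have hPset : P (Function.eval i ⁻¹' ({true} : Set Bool)) = p := by
      have := pi_inter_eval (fun _ : Fin N => μ) {i}
        (fun _ => ({true} : Set Bool))
      simpa [hμtrue] using this
    have hXind : X i = Set.indicator (Function.eval i ⁻¹' ({true} : Set Bool))
        (fun _ => (N : ℝ) + 1) := by
      funext ω
      by_cases h : ω i <;> simp [hX_def, Set.indicator, h, Function.eval]
    rw [hXind]
    rw [MeasureTheory.integral_indicator_const _
      ((measurable_pi_apply i) (measurableSet_singleton true))]
    change (P (Function.eval i ⁻¹' ({true} : Set Bool))).toReal • ((N : ℝ) + 1) = 1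
    rw [hPset]
    have hptoReal : p.toReal = ((N : ℝ) + 1)⁻¹ := by
      rw [hp_def, ENNReal.toReal_inv,
        ENNReal.toReal_add (ENNReal.natCast_ne_top N) ENNReal.one_ne_top]
      simp
    rw [hptoReal, smul_eq_mul]
    field_simp
  · -- the probability bound
    have hμfalse : μ {false} = 1 - p := by
      rw [hμ_def, PMF.toMeasure_apply_singleton _ false (measurableSet_singleton false)]
      rw [PMF.bernoulli_apply]; simp [ENNReal.coe_sub, ENNReal.coe_toNNReal (show p ≠ ⊤ by rw [hp_def]; simp)]
    have hev : {ω : Fin N → Bool | ∑ i, (1 / (N : ℝ)) * X i ω < 1 + δ}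
        = Set.pi Set.univ (fun _ : Fin N => ({false} : Set Bool)) := by
      ext ω
      simp only [Set.mem_setOf_eq, Set.mem_pi, Set.mem_univ, true_implies,
        Set.mem_singleton_iff]
      constructor
      · intro h i
        by_contra hcon
        have hωi : ω i = true := by
          cases hb : ω i
          · exact absurd hb hcon
          · rfl
        have hterm : (1 / (N : ℝ)) * X i ω = 1 + 1 / N := by
          simp only [hX_def, hωi, if_true]
          field_simp
        have hle : (1 / (N : ℝ)) * X i ω ≤ ∑ j, (1 / (N : ℝ)) * X j ω := by
          apply Finset.single_le_sum (f := fun j => (1 / (N : ℝ)) * X j ω)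
          · intro j _
            have : 0 ≤ X j ω := by
              simp only [hX_def]; split_ifs <;> positivity
            positivity
          · exact Finset.mem_univ i
        have hδlt : δ < 1 / N := by
          rw [hδ_def]
          rw [div_lt_div_iff₀ (by positivity) hN0]
          nlinarith
        rw [hterm] at hle
        linarith
      · intro h
        have : ∀ i : Fin N, (1 / (N : ℝ)) * X i ω = 0 := by
          intro i
          simp [hX_def, h i]
        rw [Finset.sum_congr rfl (fun i _ => this i), Finset.sum_const, smul_zero]
        linarith
    have hPev : P {ω : Fin N → Bool | ∑ i, (1 / (N : ℝ)) * X i ω < 1 + δ}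
        = (1 - p) ^ N := by
      rw [hev, hP_def, Measure.pi_pi]
      simp [hμfalse]
    have hptoReal : p.toReal = ((N : ℝ) + 1)⁻¹ := by
      rw [hp_def, ENNReal.toReal_inv,
        ENNReal.toReal_add (ENNReal.natCast_ne_top N) ENNReal.one_ne_top]
      simp
    have htoReal : (P {ω : Fin N → Bool | ∑ i, (1 / (N : ℝ)) * X i ω < 1 + δ}).toReal
        = (1 - ((N : ℝ) + 1)⁻¹) ^ N := by
      rw [hPev, ENNReal.toReal_pow, ENNReal.toReal_sub_of_le hple ENNReal.one_ne_top,
        ENNReal.toReal_one, hptoReal]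
    rw [htoReal]
    -- ratio computation
    have hratio : δ / (δ + 1 / (N : ℝ)) = 9 / 19 := by
      rw [hδ_def]
      rw [div_eq_div_iff (by positivity) (by norm_num)]
      field_simp
      ring
    rw [hratio]
    -- the bound `(1 - 1/(N+1))^N ≤ exp (-(N/(N+1)))`
    have hbase : 1 - ((N : ℝ) + 1)⁻¹ ≤ Real.exp (-(((N : ℝ) + 1)⁻¹)) := by
      have := Real.add_one_le_exp (-(((N : ℝ) + 1)⁻¹))
      linarith
    have hbase0 : 0 ≤ 1 - ((N : ℝ) + 1)⁻¹ := by
      have : ((N : ℝ) + 1)⁻¹ ≤ 1 := by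
        rw [inv_le_one_iff₀]
        right; linarith
      linarith
    have hpow : (1 - ((N : ℝ) + 1)⁻¹) ^ N ≤ Real.exp (-((N : ℝ) / (N + 1))) := by
      calc (1 - ((N : ℝ) + 1)⁻¹) ^ N ≤ (Real.exp (-(((N : ℝ) + 1)⁻¹))) ^ N :=
            pow_le_pow_left₀ hbase0 hbase N
        _ = Real.exp (-((N : ℝ) / (N + 1))) := by
            rw [← Real.exp_nat_mul]
            congr 1
            field_simp
    exact lt_of_le_of_lt hpow hNlt
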